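/- Unit modulus and self-duality of g_b: for every real x > 0 one has |g_b(x)| = 1, and g_b(x) = g_{b^{-1}}(x^{1/b²}), where g_{b^{-1}} is defined by the same formula with b replaced by b^{-1}. -/

import Mathlib

noncomputable section

open Complex MeasureTheory Filter Real

/-- The integrand of the contour-integral defining the quantum dilogarithm:
`e^{πtz} / ((e^{πbt}−1)(e^{πb⁻¹t}−1) t)`. -/
def qdIntegrand (b : ℝ) (z t : ℂ) : ℂ :=
  Complex.exp (↑π * t * z) /
    ((Complex.exp (↑π * ↑b * t) - 1) * (Complex.exp (↑π * (↑b)⁻¹ * t) - 1) * t)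

/-- Radius of the small semicircle above `t = 0` (any sufficiently small radius
gives the same value; we fix one symmetric in `b ↔ b⁻¹`). -/
def qdRadius (b : ℝ) : ℝ := min b b⁻¹ / 2

/-- The contour integral `∫_Ω e^{πtz}/((e^{πbt}−1)(e^{πb⁻¹t}−1)) dt/t`, where
the contour `Ω` runs along `ℝ` from `−∞` to `+∞`, deformed by a small semicircle
passing above the singularity at `t = 0`. -/
def qdContour (b : ℝ) (z : ℂ) : ℂ :=
  (∫ t in Set.Iic (-(qdRadius b)), qdIntegrand b z (t : ℂ)) +
  (∫ t in Set.Ici (qdRadius b), qdIntegrand b z (t : ℂ)) -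
  Complex.I * ∫ θ in (0:ℝ)..π,
    qdIntegrand b z ((qdRadius b : ℂ) * Complex.exp (Complex.I * (θ : ℝ))) *
      ((qdRadius b : ℂ) * Complex.exp (Complex.I * (θ : ℝ)))

/-- `ζ_b = exp((πi/2)((b² + b^{-2})/6 + 1/2))`. -/
def zetab (b : ℝ) : ℂ :=
  Complex.exp (↑π * Complex.I / 2 * (((b : ℂ)^2 + ((b : ℂ)⁻¹)^2) / 6 + 1 / 2))

/-- `Q = b + b⁻¹`. -/
def Qb (b : ℝ) : ℝ := b + b⁻¹

/-- The quantum dilogarithm on the strip `0 < Re z < Q`: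
`G_b(z) = conj(ζ_b) · exp(−∫_Ω …)`. -/
def Gstrip (b : ℝ) (z : ℂ) : ℂ :=
  (starRingEnd ℂ) (zetab b) * Complex.exp (-qdContour b z)

/-- `G : ℂ → ℂ` is (a representative of) the meromorphic continuation of the
quantum dilogarithm `G_b`: it is meromorphic on all of `ℂ`, analytic away from
the lattice `{−nb − mb⁻¹ : n, m ∈ ℤ≥0}` of poles, and agrees with the
contour-integral formula on the strip `0 < Re z < Q`. -/
def IsGb (b : ℝ) (G : ℂ → ℂ) : Prop :=
  (∀ z : ℂ, MeromorphicAt G z) ∧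
  (∀ z : ℂ, (∀ n m : ℕ, z ≠ -(n : ℂ) * (b : ℂ) - (m : ℂ) * ((b : ℂ))⁻¹) →
    AnalyticAt ℂ G z) ∧
  (∀ z : ℂ, 0 < z.re → z.re < Qb b → G z = Gstrip b z)


/-- The function `g_b(x) = conj(ζ_b)/G_b(Q/2 + log(x)/(2πib))` for real `x > 0`,
defined relative to a representative `G` of the meromorphic continuation of `G_b`. -/
def gbFun (b : ℝ) (G : ℂ → ℂ) (x : ℝ) : ℂ :=
  (starRingEnd ℂ) (zetab b) /
    G ((Qb b : ℂ) / 2 + (Real.log x : ℂ) / (2 * ↑π * Complex.I * (b : ℂ)))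


namespace QDaux

lemma qd_key (b : ℝ) (z t : ℂ) :
    qdIntegrand b (↑(Qb b) - z) t = - qdIntegrand b z (-t) := by
  unfold qdIntegrand Qb
  push_cast
  have e1 : Complex.exp (↑π * t * ((↑b + (↑b)⁻¹) - z)) =
      Complex.exp (↑π * ↑b * t) * Complex.exp (↑π * (↑b)⁻¹ * t) *
        Complex.exp (↑π * (-t) * z) := by
    rw [← Complex.exp_add, ← Complex.exp_add]; ring_nf
  have e2 : Complex.exp (↑π * ↑b * (-t)) = (Complex.exp (↑π * ↑b * t))⁻¹ := by
    rw [← Complex.exp_neg]; ring_nf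
  have e3 : Complex.exp (↑π * (↑b)⁻¹ * (-t)) = (Complex.exp (↑π * (↑b)⁻¹ * t))⁻¹ := by
    rw [← Complex.exp_neg]; ring_nf
  rw [e1, e2, e3]
  set a := Complex.exp (↑π * ↑b * t) with ha
  set c := Complex.exp (↑π * (↑b)⁻¹ * t) with hc
  have ha0 : a ≠ 0 := Complex.exp_ne_zero _
  have hc0 : c ≠ 0 := Complex.exp_ne_zero _
  by_cases h1 : a = 1
  · simp [h1]
  by_cases h2 : c = 1
  · simp [h2]
  by_cases h3 : t = 0
  · simp [h3]
  have hd : (a⁻¹ - 1) * (c⁻¹ - 1) * (-t) = -(((a-1)*(c-1)*t)/(a*c)) := by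
    field_simp
    try ring_nf
    try tauto
  rw [hd, div_neg, neg_neg, div_div_eq_mul_div]
  ring

lemma qd_conj (b : ℝ) (z t : ℂ) :
    (starRingEnd ℂ) (qdIntegrand b z t) =
      qdIntegrand b ((starRingEnd ℂ) z) ((starRingEnd ℂ) t) := by
  simp only [qdIntegrand, map_div₀, map_mul, map_sub, map_one, ← Complex.exp_conj,
    Complex.conj_ofReal, map_inv₀]

lemma qdIntegrand_inv (b : ℝ) : qdIntegrand b⁻¹ = qdIntegrand b := by
  funext z t
  unfold qdIntegrand
  push_cast
  rw [inv_inv]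
  ring_nf

lemma qdRadius_inv (b : ℝ) : qdRadius b⁻¹ = qdRadius b := by
  unfold qdRadius; rw [inv_inv, min_comm]

lemma qdContour_inv (b : ℝ) : qdContour b⁻¹ = qdContour b := by
  funext z; unfold qdContour; rw [qdIntegrand_inv b, qdRadius_inv]

lemma Qb_inv (b : ℝ) : Qb b⁻¹ = Qb b := by
  unfold Qb; rw [inv_inv, add_comm]

lemma zetab_inv (b : ℝ) : zetab b⁻¹ = zetab b := by
  unfold zetab; push_cast; rw [inv_inv, add_comm (((b:ℂ))⁻¹^2)]

lemma Gstrip_inv (b : ℝ) : Gstrip b⁻¹ = Gstrip b := by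
  funext z; unfold Gstrip; rw [zetab_inv, qdContour_inv]

lemma qdContour_conj (b : ℝ) (z : ℂ) (hz : (starRingEnd ℂ) z = ↑(Qb b) - z) :
    (starRingEnd ℂ) (qdContour b z) = -qdContour b z := by
  set r := qdRadius b with hr
  have key : ∀ t : ℂ, qdIntegrand b ((starRingEnd ℂ) z) t = -qdIntegrand b z (-t) := by
    intro t; rw [hz]; exact qd_key b z t
  have hA : (starRingEnd ℂ) (∫ t in Set.Iic (-r), qdIntegrand b z (t : ℂ)) =
      -(∫ t in Set.Ici r, qdIntegrand b z (t : ℂ)) := by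
    rw [← integral_conj]
    simp_rw [qd_conj, Complex.conj_ofReal, key, ← Complex.ofReal_neg]
    rw [integral_neg, neg_inj, integral_Ici_eq_integral_Ioi]
    have h := integral_comp_neg_Iic (-r) (fun s : ℝ => qdIntegrand b z (s:ℂ))
    rw [neg_neg] at h
    exact h
  have hB : (starRingEnd ℂ) (∫ t in Set.Ici r, qdIntegrand b z (t : ℂ)) =
      -(∫ t in Set.Iic (-r), qdIntegrand b z (t : ℂ)) := by
    rw [← integral_conj]
    simp_rw [qd_conj, Complex.conj_ofReal, key, ← Complex.ofReal_neg]
    rw [integral_neg, neg_inj, integral_Ici_eq_integral_Ioi]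
    exact integral_comp_neg_Ioi r (fun s : ℝ => qdIntegrand b z (s:ℂ))
  set g : ℝ → ℂ := fun θ =>
    qdIntegrand b z ((r : ℂ) * Complex.exp (Complex.I * (θ : ℝ))) *
      ((r : ℂ) * Complex.exp (Complex.I * (θ : ℝ))) with hg
  have pt : ∀ θ : ℝ, (starRingEnd ℂ) (g θ) = g (π - θ) := by
    intro θ
    have hc : (starRingEnd ℂ) ((r:ℂ) * Complex.exp (Complex.I * (θ:ℝ))) =
        (r:ℂ) * Complex.exp (Complex.I * ((-θ : ℝ) : ℂ)) := by
      rw [map_mul, Complex.conj_ofReal, ← Complex.exp_conj, map_mul,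
        Complex.conj_I, Complex.conj_ofReal]
      push_cast
      ring_nf
    have he : Complex.exp (Complex.I * ((π - θ : ℝ) : ℂ)) =
        -Complex.exp (Complex.I * ((-θ : ℝ) : ℂ)) := by
      push_cast
      rw [show Complex.I * ((π : ℂ) - θ) = ↑π * Complex.I + Complex.I * (-θ) by ring,
        Complex.exp_add, Complex.exp_pi_mul_I]
      ring_nf
    rw [hg]
    simp only [map_mul, qd_conj, hc, key]
    rw [he]
    rw [show (r:ℂ) * -Complex.exp (Complex.I * ((-θ:ℝ):ℂ)) =
      -((r:ℂ) * Complex.exp (Complex.I * ((-θ:ℝ):ℂ))) by ring]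
    ring
  have hS : (starRingEnd ℂ) (∫ θ in (0:ℝ)..π, g θ) = ∫ θ in (0:ℝ)..π, g θ := by
    have hconj : (starRingEnd ℂ) (∫ θ in (0:ℝ)..π, g θ) =
        ∫ θ in (0:ℝ)..π, (starRingEnd ℂ) (g θ) := by
      rw [intervalIntegral.integral_of_le Real.pi_pos.le,
        intervalIntegral.integral_of_le Real.pi_pos.le, integral_conj]
    rw [hconj]
    simp_rw [pt]
    rw [intervalIntegral.integral_comp_sub_left g π]
    simp
  unfold qdContour
  rw [map_sub, map_add, map_mul, Complex.conj_I, hA, hB, ← hr, ← hg, hS]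
  ring

end QDaux

/-- Unit modulus and self-duality of `g_b`: for every real `x > 0`,
`|g_b(x)| = 1` and `g_b(x) = g_{b⁻¹}(x^{1/b²})`, where `g_{b⁻¹}` is defined by the
same formula with `b` replaced by `b⁻¹`. -/
theorem gb_unit_modulus_self_duality (b : ℝ) (hb0 : 0 < b) (hb1 : b < 1)
    (hirr : Irrational (b ^ 2)) (G G' : ℂ → ℂ)
    (hG : IsGb b G) (hG' : IsGb b⁻¹ G') (x : ℝ) (hx : 0 < x) :
    ‖gbFun b G x‖ = 1 ∧
    gbFun b G x = gbFun b⁻¹ G' (x ^ (1 / b ^ 2)) := by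
  have hbne : b ≠ 0 := hb0.ne'
  have hbC : (b : ℂ) ≠ 0 := Complex.ofReal_ne_zero.mpr hbne
  have hπC : (π : ℂ) ≠ 0 := Complex.ofReal_ne_zero.mpr Real.pi_ne_zero
  set L := Real.log x with hL
  set zz : ℂ := (Qb b : ℂ) / 2 + (L : ℂ) / (2 * ↑π * Complex.I * (b : ℂ)) with hzz
  set c : ℝ := -(L / (2 * π * b)) with hcdef
  have hw : ((L : ℂ)) / (2 * ↑π * Complex.I * (b : ℂ)) = (c : ℂ) * Complex.I := by
    rw [hcdef]
    push_cast
    rw [div_eq_iff (by simp [hπC, hbC, Complex.I_ne_zero] : (2 * (π:ℂ) * Complex.I * (b:ℂ)) ≠ 0)]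
    have : Complex.I * Complex.I = -1 := Complex.I_mul_I
    field_simp
    linear_combination (L:ℂ)*Complex.I_sq
  have hzz' : zz = (Qb b : ℂ) / 2 + (c : ℂ) * Complex.I := by rw [hzz, hw]
  have hre : zz.re = Qb b / 2 := by
    rw [hzz']; simp
  have hQpos : 0 < Qb b := by
    have : 0 < b⁻¹ := inv_pos.mpr hb0
    unfold Qb; linarith
  have hre1 : 0 < zz.re := by rw [hre]; linarith
  have hre2 : zz.re < Qb b := by rw [hre]; linarith
  have hconjz : (starRingEnd ℂ) zz = ↑(Qb b) - zz := by
    rw [hzz']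
    simp only [map_add, map_mul, map_div₀, Complex.conj_ofReal, Complex.conj_I, map_ofNat]
    ring
  have hCconj := QDaux.qdContour_conj b zz hconjz
  have hCre : (qdContour b zz).re = 0 := by
    have h := congrArg Complex.re hCconj
    rw [Complex.conj_re, Complex.neg_re] at h
    linarith
  have hζ : (starRingEnd ℂ) (zetab b) ≠ 0 := by
    simp [zetab, Complex.exp_ne_zero]
  have hGz : G zz = Gstrip b zz := hG.2.2 zz hre1 hre2
  have hgb : gbFun b G x = Complex.exp (qdContour b zz) := by
    rw [gbFun, ← hL, ← hzz, hGz, Gstrip]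
    rw [div_mul_eq_div_div]
    rw [div_self hζ, one_div, ← Complex.exp_neg, neg_neg]
  constructor
  · rw [hgb, Complex.norm_exp, hCre, Real.exp_zero]
  · -- self-duality
    have hxlog : Real.log (x ^ (1 / b ^ 2)) = (1 / b ^ 2) * L := Real.log_rpow hx _
    have hb2 : (b : ℂ) ^ 2 ≠ 0 := pow_ne_zero 2 hbC
    have hzz2 : ((Qb b⁻¹ : ℝ) : ℂ) / 2 +
        ((Real.log (x ^ (1 / b ^ 2)) : ℝ) : ℂ) / (2 * ↑π * Complex.I * ((b⁻¹ : ℝ) : ℂ)) = zz := by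
      rw [hxlog, QDaux.Qb_inv, hzz]
      push_cast
      congr 1
      rw [div_eq_div_iff] <;>
        simp [hπC, hbC, Complex.I_ne_zero, hb2, mul_ne_zero]
      field_simp
      try ring
    have hG'z : G' zz = Gstrip b zz := by
      rw [hG'.2.2 zz hre1 (by rw [QDaux.Qb_inv]; exact hre2), QDaux.Gstrip_inv]
    have e1 : gbFun b G x = (starRingEnd ℂ) (zetab b) / G zz := rfl
    have e2 : gbFun b⁻¹ G' (x ^ (1 / b ^ 2)) = (starRingEnd ℂ) (zetab b) / G' zz := by
      rw [gbFun, QDaux.zetab_inv, hzz2]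
    rw [e1, e2, hGz, hG'z]


end
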